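/- Let {g₁, g₂} be functions with expansions g_l(z) = Σ_{m∈M} γ_{l,m} B_m(z), and suppose: (a) there are constants 0 < c ≤ C with c h² Σ_m γ_{l,m}² ≤ ‖g_l‖² ≤ C h² Σ_m γ_{l,m}² for l = 1,2 (norm equivalence with mesh parameter h), and (b) max_{m,m′} |⟨B_m, B_{m′}⟩_N − ⟨B_m, B_{m′}⟩| ≤ ε, where only at most K pairs (m,m′) have B_m B_{m′} not identically zero for each m. Then |⟨g₁, g₂⟩_N − ⟨g₁, g₂⟩| ≤ (K ε / (c h²)) ‖g₁‖ ‖g₂‖. -/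

import Mathlib

open MeasureTheory

/-- Core deterministic estimate for the empirical vs theoretical inner product:
if `g_l = Σ_m γ_{l,m} B_m`, the norm equivalence `c h² ‖γ_l‖² ≤ ‖g_l‖² ≤ C h² ‖γ_l‖²`
holds, the basis Gram entries satisfy `|⟨B_m,B_{m′}⟩_N − ⟨B_m,B_{m′}⟩| ≤ ε`, and the
basis has local support (products vanish off a symmetric set `S` with at most `K`
partners per index), then `|⟨g₁,g₂⟩_N − ⟨g₁,g₂⟩| ≤ (Kε/(c h²)) ‖g₁‖ ‖g₂‖`. -/
theorem empirical_inner_product_approximation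
    {M Ω : Type*} [Fintype M] [DecidableEq M] [MeasurableSpace Ω]
    (μ : Measure Ω) (B : M → Ω → ℝ)
    (hint : ∀ m m' : M, Integrable (fun z => B m z * B m' z) μ)
    (N : ℕ) (hN : 0 < N) (zs : Fin N → Ω)
    (γ₁ γ₂ : M → ℝ) (g₁ g₂ : Ω → ℝ)
    (hg₁ : g₁ = fun z => ∑ m, γ₁ m * B m z)
    (hg₂ : g₂ = fun z => ∑ m, γ₂ m * B m z)
    (c C h : ℝ) (hc : 0 < c) (hcC : c ≤ C) (hh : 0 < h)
    (hlow₁ : c * h ^ 2 * ∑ m, γ₁ m ^ 2 ≤ ∫ z, (g₁ z) ^ 2 ∂μ)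
    (hhigh₁ : (∫ z, (g₁ z) ^ 2 ∂μ) ≤ C * h ^ 2 * ∑ m, γ₁ m ^ 2)
    (hlow₂ : c * h ^ 2 * ∑ m, γ₂ m ^ 2 ≤ ∫ z, (g₂ z) ^ 2 ∂μ)
    (hhigh₂ : (∫ z, (g₂ z) ^ 2 ∂μ) ≤ C * h ^ 2 * ∑ m, γ₂ m ^ 2)
    (ε : ℝ) (hε : 0 ≤ ε)
    (hgram : ∀ m m' : M,
      |(1 / (N : ℝ)) * ∑ j, B m (zs j) * B m' (zs j) - ∫ z, B m z * B m' z ∂μ| ≤ ε)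
    (S : Finset (M × M))
    (hsupp : ∀ m m' : M, (m, m') ∉ S → ∀ z : Ω, B m z * B m' z = 0)
    (hsymm : ∀ m m' : M, (m, m') ∈ S → (m', m) ∈ S)
    (K : ℕ) (hK : ∀ m : M, (S.filter (fun p => p.1 = m)).card ≤ K) :
    |(1 / (N : ℝ)) * ∑ j, g₁ (zs j) * g₂ (zs j) - ∫ z, g₁ z * g₂ z ∂μ| ≤
      (K : ℝ) * ε / (c * h ^ 2) *
        Real.sqrt (∫ z, (g₁ z) ^ 2 ∂μ) * Real.sqrt (∫ z, (g₂ z) ^ 2 ∂μ) := by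
  set D : M → M → ℝ := fun m m' =>
    (1 / (N : ℝ)) * ∑ j, B m (zs j) * B m' (zs j) - ∫ z, B m z * B m' z ∂μ with hD
  have hprod : ∀ z : Ω, g₁ z * g₂ z
      = ∑ p ∈ Finset.univ ×ˢ (Finset.univ : Finset M),
          γ₁ p.1 * γ₂ p.2 * (B p.1 z * B p.2 z) := by
    intro z
    rw [hg₁, hg₂, Finset.sum_product, Fintype.sum_mul_sum]
    refine Finset.sum_congr rfl fun m _ => Finset.sum_congr rfl fun m' _ => ?_
    ring
  have hE : (1 / (N : ℝ)) * ∑ j, g₁ (zs j) * g₂ (zs j)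
      = ∑ p ∈ Finset.univ ×ˢ (Finset.univ : Finset M), γ₁ p.1 * γ₂ p.2 *
          ((1 / (N : ℝ)) * ∑ j, B p.1 (zs j) * B p.2 (zs j)) := by
    calc (1 / (N : ℝ)) * ∑ j, g₁ (zs j) * g₂ (zs j)
        = ∑ p ∈ Finset.univ ×ˢ (Finset.univ : Finset M), ∑ j,
            (1 / (N : ℝ)) * (γ₁ p.1 * γ₂ p.2 * (B p.1 (zs j) * B p.2 (zs j))) := by
          simp only [hprod, Finset.mul_sum]
          exact Finset.sum_comm
      _ = _ := by
          refine Finset.sum_congr rfl fun p _ => ?_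
          simp only [Finset.mul_sum]
          refine Finset.sum_congr rfl fun j _ => by ring
  have hI : (∫ z, g₁ z * g₂ z ∂μ)
      = ∑ p ∈ Finset.univ ×ˢ (Finset.univ : Finset M), γ₁ p.1 * γ₂ p.2 *
          (∫ z, B p.1 z * B p.2 z ∂μ) := by
    simp only [hprod]
    rw [integral_finset_sum]
    · refine Finset.sum_congr rfl fun p _ => ?_
      rw [integral_const_mul]
    · intro p _
      exact (hint p.1 p.2).const_mul _
  have hkey : (1 / (N : ℝ)) * ∑ j, g₁ (zs j) * g₂ (zs j) - ∫ z, g₁ z * g₂ z ∂μ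
      = ∑ p ∈ S, γ₁ p.1 * γ₂ p.2 * D p.1 p.2 := by
    rw [hE, hI, ← Finset.sum_sub_distrib]
    simp only [← mul_sub]
    refine (Finset.sum_subset (Finset.subset_univ S |>.trans (by simp [Finset.subset_iff]))
      ?_).symm
    intro p _ hp
    have h0 : ∀ z, B p.1 z * B p.2 z = 0 := hsupp p.1 p.2 hp
    simp [h0]
  rw [hkey]
  -- bound by sum of absolute values
  have h1 : |∑ p ∈ S, γ₁ p.1 * γ₂ p.2 * D p.1 p.2| ≤
      ε * ∑ p ∈ S, |γ₁ p.1| * |γ₂ p.2| := by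
    calc |∑ p ∈ S, γ₁ p.1 * γ₂ p.2 * D p.1 p.2|
        ≤ ∑ p ∈ S, |γ₁ p.1 * γ₂ p.2 * D p.1 p.2| := Finset.abs_sum_le_sum_abs _ _
      _ ≤ ∑ p ∈ S, |γ₁ p.1| * |γ₂ p.2| * ε := by
          refine Finset.sum_le_sum fun p _ => ?_
          rw [abs_mul, abs_mul]
          exact mul_le_mul_of_nonneg_left (hgram p.1 p.2)
            (mul_nonneg (abs_nonneg _) (abs_nonneg _))
      _ = ε * ∑ p ∈ S, |γ₁ p.1| * |γ₂ p.2| := by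
          rw [Finset.mul_sum]; exact Finset.sum_congr rfl fun p _ => by ring
  -- Cauchy–Schwarz over S
  have hCS : (∑ p ∈ S, |γ₁ p.1| * |γ₂ p.2|) ^ 2 ≤
      (∑ p ∈ S, γ₁ p.1 ^ 2) * ∑ p ∈ S, γ₂ p.2 ^ 2 := by
    have := Finset.sum_mul_sq_le_sq_mul_sq S (fun p => |γ₁ p.1|) (fun p => |γ₂ p.2|)
    simpa [sq_abs] using this
  -- fiber cardinality bounds
  have hfib1 : (∑ p ∈ S, γ₁ p.1 ^ 2) ≤ (K : ℝ) * ∑ m, γ₁ m ^ 2 := by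
    rw [← Finset.sum_fiberwise S (fun p => p.1) (fun p => γ₁ p.1 ^ 2)]
    rw [Finset.mul_sum]
    refine Finset.sum_le_sum fun m _ => ?_
    calc ∑ p ∈ S.filter (fun p => p.1 = m), γ₁ p.1 ^ 2
        = ∑ p ∈ S.filter (fun p => p.1 = m), γ₁ m ^ 2 := by
          refine Finset.sum_congr rfl fun p hp => ?_
          rw [(Finset.mem_filter.1 hp).2]
      _ = (S.filter (fun p => p.1 = m)).card * γ₁ m ^ 2 := by
          rw [Finset.sum_const, nsmul_eq_mul]
      _ ≤ (K : ℝ) * γ₁ m ^ 2 := by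
          refine mul_le_mul_of_nonneg_right ?_ (sq_nonneg _)
          exact_mod_cast hK m
  have hcard2 : ∀ m : M, (S.filter (fun p => p.2 = m)).card ≤ K := by
    intro m
    refine le_trans ?_ (hK m)
    refine Finset.card_le_card_of_injOn (fun p => (p.2, p.1)) ?_ ?_
    · intro p hp
      rcases Finset.mem_filter.1 hp with ⟨hpS, hpm⟩
      refine Finset.mem_filter.2 ⟨?_, by simpa⟩
      exact hsymm p.1 p.2 hpS
    · intro p _ q _ hpq
      exact Prod.ext (congrArg Prod.snd hpq) (congrArg Prod.fst hpq)
  have hfib2 : (∑ p ∈ S, γ₂ p.2 ^ 2) ≤ (K : ℝ) * ∑ m, γ₂ m ^ 2 := by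
    rw [← Finset.sum_fiberwise S (fun p => p.2) (fun p => γ₂ p.2 ^ 2)]
    rw [Finset.mul_sum]
    refine Finset.sum_le_sum fun m _ => ?_
    calc ∑ p ∈ S.filter (fun p => p.2 = m), γ₂ p.2 ^ 2
        = ∑ p ∈ S.filter (fun p => p.2 = m), γ₂ m ^ 2 := by
          refine Finset.sum_congr rfl fun p hp => ?_
          rw [(Finset.mem_filter.1 hp).2]
      _ = (S.filter (fun p => p.2 = m)).card * γ₂ m ^ 2 := by
          rw [Finset.sum_const, nsmul_eq_mul]
      _ ≤ (K : ℝ) * γ₂ m ^ 2 := by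
          refine mul_le_mul_of_nonneg_right ?_ (sq_nonneg _)
          exact_mod_cast hcard2 m
  -- nonnegativity facts
  have hγ₁ : (0:ℝ) ≤ ∑ m, γ₁ m ^ 2 := Finset.sum_nonneg fun _ _ => sq_nonneg _
  have hγ₂ : (0:ℝ) ≤ ∑ m, γ₂ m ^ 2 := Finset.sum_nonneg fun _ _ => sq_nonneg _
  have hch : (0:ℝ) < c * h ^ 2 := mul_pos hc (pow_pos hh 2)
  -- sqrt computations
  have hsum_le : ∑ p ∈ S, |γ₁ p.1| * |γ₂ p.2| ≤
      (K : ℝ) * Real.sqrt (∑ m, γ₁ m ^ 2) * Real.sqrt (∑ m, γ₂ m ^ 2) := by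
    have hSnn : (0:ℝ) ≤ ∑ p ∈ S, |γ₁ p.1| * |γ₂ p.2| :=
      Finset.sum_nonneg fun _ _ => mul_nonneg (abs_nonneg _) (abs_nonneg _)
    have h2 : (∑ p ∈ S, |γ₁ p.1| * |γ₂ p.2|) ^ 2 ≤
        ((K : ℝ) * ∑ m, γ₁ m ^ 2) * ((K : ℝ) * ∑ m, γ₂ m ^ 2) := by
      refine hCS.trans ?_
      exact mul_le_mul hfib1 hfib2 (Finset.sum_nonneg fun _ _ => sq_nonneg _)
        (by positivity)
    have h3 := Real.sqrt_le_sqrt h2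
    rw [Real.sqrt_sq hSnn] at h3
    have hq : ((K:ℝ) * Real.sqrt (∑ m, γ₁ m ^ 2) * Real.sqrt (∑ m, γ₂ m ^ 2)) ^ 2
        = ((K : ℝ) * ∑ m, γ₁ m ^ 2) * ((K : ℝ) * ∑ m, γ₂ m ^ 2) := by
      rw [mul_pow, mul_pow, Real.sq_sqrt hγ₁, Real.sq_sqrt hγ₂]
      ring
    rwa [← hq, Real.sqrt_sq (by positivity)] at h3
  -- relate ‖γ‖ to ‖g‖
  set r := Real.sqrt (c * h ^ 2) with hr
  have hrpos : 0 < r := Real.sqrt_pos.2 hch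
  have hnorm1 : Real.sqrt (∑ m, γ₁ m ^ 2) ≤
      Real.sqrt (∫ z, (g₁ z) ^ 2 ∂μ) / r := by
    rw [le_div_iff₀ hrpos]
    rw [hr, ← Real.sqrt_mul hγ₁]
    exact Real.sqrt_le_sqrt (by rw [mul_comm]; exact hlow₁)
  have hnorm2 : Real.sqrt (∑ m, γ₂ m ^ 2) ≤
      Real.sqrt (∫ z, (g₂ z) ^ 2 ∂μ) / r := by
    rw [le_div_iff₀ hrpos]
    rw [hr, ← Real.sqrt_mul hγ₂]
    exact Real.sqrt_le_sqrt (by rw [mul_comm]; exact hlow₂)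
  have hr2 : r * r = c * h ^ 2 := Real.mul_self_sqrt hch.le
  have hfinal : ε * ∑ p ∈ S, |γ₁ p.1| * |γ₂ p.2| ≤
      (K : ℝ) * ε / (c * h ^ 2) *
        Real.sqrt (∫ z, (g₁ z) ^ 2 ∂μ) * Real.sqrt (∫ z, (g₂ z) ^ 2 ∂μ) := by
    have step1 : ε * ∑ p ∈ S, |γ₁ p.1| * |γ₂ p.2| ≤
        ε * ((K : ℝ) * Real.sqrt (∑ m, γ₁ m ^ 2) * Real.sqrt (∑ m, γ₂ m ^ 2)) :=
      mul_le_mul_of_nonneg_left hsum_le hε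
    refine step1.trans ?_
    have t1nn : 0 ≤ Real.sqrt (∫ z, (g₁ z) ^ 2 ∂μ) := Real.sqrt_nonneg _
    have t2nn : 0 ≤ Real.sqrt (∫ z, (g₂ z) ^ 2 ∂μ) := Real.sqrt_nonneg _
    have step2 : (K : ℝ) * Real.sqrt (∑ m, γ₁ m ^ 2) * Real.sqrt (∑ m, γ₂ m ^ 2) ≤
        (K : ℝ) * (Real.sqrt (∫ z, (g₁ z) ^ 2 ∂μ) / r) *
          (Real.sqrt (∫ z, (g₂ z) ^ 2 ∂μ) / r) := by
      refine mul_le_mul ?_ hnorm2 (Real.sqrt_nonneg _) (by positivity)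
      exact mul_le_mul_of_nonneg_left hnorm1 (Nat.cast_nonneg K)
    have := mul_le_mul_of_nonneg_left step2 hε
    refine this.trans (le_of_eq ?_)
    field_simp
    rw [show r ^ 2 = c * h ^ 2 by rw [sq, hr2]]
    ring
  exact h1.trans hfinal
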